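/- If (u*, {V^{(t),*}}, {y^{(t),*}}, {z^{(t),*}}, λ*, {Λ^{(t),*}}) satisfies the dual KKT system, then (u*, {y^{(t),*}}, {z^{(t),*}}, {V^{(t),*}}) is an optimal solution of the dual problem: it is feasible for the dual problem and max_{1≤i≤m} u*_i + ∑_{t=1}^N ⟨z^{(t),*}, a^{(t)}⟩ ≤ max_{1≤i≤m} u_i + ∑_{t=1}^N ⟨z^{(t)}, a^{(t)}⟩ for every feasible (u, {y^{(t)}}, {z^{(t)}}, {V^{(t)}}). -/
import Mathlib


/-- The unit simplex `Δ_m` in `ℝ^m`. -/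
def simplexSet (m : ℕ) : Set (Fin m → ℝ) :=
  {w | (∀ i, 0 ≤ w i) ∧ ∑ i, w i = 1}

/-- Feasibility for the dual problem. -/
def DualFeasible (N m : ℕ) (mt : Fin N → ℕ)
    (D : ∀ t : Fin N, Matrix (Fin m) (Fin (mt t)) ℝ)
    (u : Fin m → ℝ) (y : Fin N → Fin m → ℝ)
    (z : ∀ t : Fin N, Fin (mt t) → ℝ)
    (V : ∀ t : Fin N, Matrix (Fin m) (Fin (mt t)) ℝ) : Prop :=
  (∀ i, ∑ t, y t i = u i) ∧
    ∀ t : Fin N,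
      (∀ i j, V t i j = D t i j + y t i + z t j) ∧
      (∀ i j, 0 ≤ V t i j)

/-- The dual objective `max_{1≤i≤m} u_i + ∑_t ⟨z^{(t)}, a^{(t)}⟩`. -/
noncomputable def dualObj (N m : ℕ) (mt : Fin N → ℕ)
    (a : ∀ t : Fin N, Fin (mt t) → ℝ)
    (u : Fin m → ℝ) (z : ∀ t : Fin N, Fin (mt t) → ℝ) : ℝ :=
  (⨆ i, u i) + ∑ t, ∑ j, z t j * a t j

/-- The dual KKT system. -/
def DualKKT (N m : ℕ) (mt : Fin N → ℕ)
    (D : ∀ t : Fin N, Matrix (Fin m) (Fin (mt t)) ℝ)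
    (a : ∀ t : Fin N, Fin (mt t) → ℝ)
    (u : Fin m → ℝ) (V : ∀ t : Fin N, Matrix (Fin m) (Fin (mt t)) ℝ)
    (y : Fin N → Fin m → ℝ) (z : ∀ t : Fin N, Fin (mt t) → ℝ)
    (lam : Fin m → ℝ) (Lam : ∀ t : Fin N, Matrix (Fin m) (Fin (mt t)) ℝ) : Prop :=
  (lam ∈ simplexSet m ∧ ∑ i, u i * lam i = ⨆ i, u i) ∧
  (∀ t : Fin N, (∀ i j, 0 ≤ V t i j) ∧ (∀ i j, 0 ≤ Lam t i j) ∧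
    ∑ i, ∑ j, Lam t i j * V t i j = 0) ∧
  (∀ t : Fin N, (∀ i, ∑ j, Lam t i j = lam i) ∧ (∀ j, ∑ i, Lam t i j = a t j)) ∧
  (∀ i, ∑ t, y t i = u i) ∧
  (∀ t : Fin N, ∀ i j, V t i j = D t i j + y t i + z t j)

/-- Key summation identity: the inner product `∑_t ⟨Λ^{(t)}, V^{(t)}⟩` decomposes
for any feasible point. -/
lemma kkt_sum_identity (N m : ℕ) (mt : Fin N → ℕ)
    (D : ∀ t : Fin N, Matrix (Fin m) (Fin (mt t)) ℝ)
    (a : ∀ t : Fin N, Fin (mt t) → ℝ)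
    (u : Fin m → ℝ) (y : Fin N → Fin m → ℝ)
    (z : ∀ t : Fin N, Fin (mt t) → ℝ)
    (V : ∀ t : Fin N, Matrix (Fin m) (Fin (mt t)) ℝ)
    (lam : Fin m → ℝ) (Lam : ∀ t : Fin N, Matrix (Fin m) (Fin (mt t)) ℝ)
    (hrow : ∀ t i, ∑ j, Lam t i j = lam i)
    (hcol : ∀ t j, ∑ i, Lam t i j = a t j)
    (hu : ∀ i, ∑ t, y t i = u i)
    (hV : ∀ t i j, V t i j = D t i j + y t i + z t j) :
    ∑ t, ∑ i, ∑ j, Lam t i j * V t i j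
      = (∑ t, ∑ i, ∑ j, Lam t i j * D t i j) + ∑ i, u i * lam i
        + ∑ t, ∑ j, z t j * a t j := by
  have h1 : ∀ t : Fin N, ∑ i, ∑ j, Lam t i j * V t i j
      = (∑ i, ∑ j, Lam t i j * D t i j) + (∑ i, y t i * lam i)
        + ∑ j, z t j * a t j := by
    intro t
    have : ∑ i, ∑ j, Lam t i j * V t i j
        = ∑ i, ((∑ j, Lam t i j * D t i j) + (∑ j, Lam t i j) * y t i
            + ∑ j, Lam t i j * z t j) := by
      refine Finset.sum_congr rfl fun i _ => ?_
      rw [Finset.sum_mul, ← Finset.sum_add_distrib, ← Finset.sum_add_distrib]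
      refine Finset.sum_congr rfl fun j _ => ?_
      rw [hV]; ring
    rw [this, Finset.sum_add_distrib, Finset.sum_add_distrib]
    congr 1
    · congr 1
      refine Finset.sum_congr rfl fun i _ => ?_
      rw [hrow, mul_comm]
    · rw [Finset.sum_comm]
      refine Finset.sum_congr rfl fun j _ => ?_
      rw [← hcol t j, Finset.mul_sum]
      exact Finset.sum_congr rfl fun i _ => mul_comm _ _
  calc ∑ t, ∑ i, ∑ j, Lam t i j * V t i j
      = ∑ t, ((∑ i, ∑ j, Lam t i j * D t i j) + (∑ i, y t i * lam i)
          + ∑ j, z t j * a t j) := Finset.sum_congr rfl fun t _ => h1 t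
    _ = _ := by
        rw [Finset.sum_add_distrib, Finset.sum_add_distrib]
        congr 1
        congr 1
        rw [Finset.sum_comm]
        refine Finset.sum_congr rfl fun i _ => ?_
        rw [← Finset.sum_mul, hu]

/-- any solution of the dual KKT system yields an optimal solution
of the dual problem. -/
theorem stmt_5 (N m : ℕ) (hN : 0 < N) (hm : 0 < m)
    (mt : Fin N → ℕ) (hmt : ∀ t, 0 < mt t)
    (D : ∀ t : Fin N, Matrix (Fin m) (Fin (mt t)) ℝ)
    (a : ∀ t : Fin N, Fin (mt t) → ℝ)
    (ha : ∀ t j, 0 ≤ a t j) (hasum : ∀ t, ∑ j, a t j = 1)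
    (ustar : Fin m → ℝ) (Vstar : ∀ t : Fin N, Matrix (Fin m) (Fin (mt t)) ℝ)
    (ystar : Fin N → Fin m → ℝ) (zstar : ∀ t : Fin N, Fin (mt t) → ℝ)
    (lamstar : Fin m → ℝ) (Lamstar : ∀ t : Fin N, Matrix (Fin m) (Fin (mt t)) ℝ)
    (hKKT : DualKKT N m mt D a ustar Vstar ystar zstar lamstar Lamstar) :
    DualFeasible N m mt D ustar ystar zstar Vstar ∧
    ∀ (u : Fin m → ℝ) (y : Fin N → Fin m → ℝ)
      (z : ∀ t : Fin N, Fin (mt t) → ℝ)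
      (V : ∀ t : Fin N, Matrix (Fin m) (Fin (mt t)) ℝ),
      DualFeasible N m mt D u y z V →
      dualObj N m mt a ustar zstar ≤ dualObj N m mt a u z := by
  obtain ⟨⟨⟨hlam0, hlam1⟩, hmaxstar⟩, hCS, hLamrc, husum, hVstar⟩ := hKKT
  have hfeas : DualFeasible N m mt D ustar ystar zstar Vstar :=
    ⟨husum, fun t => ⟨hVstar t, (hCS t).1⟩⟩
  refine ⟨hfeas, fun u y z V hfU => ?_⟩
  set C := ∑ t, ∑ i, ∑ j, Lamstar t i j * D t i j with hC
  -- identity for the KKT point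
  have hstar : (0 : ℝ) = C + ∑ i, ustar i * lamstar i + ∑ t, ∑ j, zstar t j * a t j := by
    have := kkt_sum_identity N m mt D a ustar ystar zstar Vstar lamstar Lamstar
      (fun t => (hLamrc t).1) (fun t => (hLamrc t).2) husum hVstar
    rw [← this]
    exact (Finset.sum_eq_zero fun t _ => (hCS t).2.2).symm
  -- identity for the feasible point
  obtain ⟨husum', hfeas'⟩ := hfU
  have hgen := kkt_sum_identity N m mt D a u y z V lamstar Lamstar
    (fun t => (hLamrc t).1) (fun t => (hLamrc t).2) husum' (fun t => (hfeas' t).1)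
  have hpos : 0 ≤ ∑ t, ∑ i, ∑ j, Lamstar t i j * V t i j :=
    Finset.sum_nonneg fun t _ => Finset.sum_nonneg fun i _ => Finset.sum_nonneg
      fun j _ => mul_nonneg ((hCS t).2.1 i j) ((hfeas' t).2 i j)
  -- ⟨u, λ⟩ ≤ ⨆ u
  have hub : ∑ i, u i * lamstar i ≤ ⨆ i, u i := by
    have : Nonempty (Fin m) := ⟨⟨0, hm⟩⟩
    calc ∑ i, u i * lamstar i ≤ ∑ i, (⨆ k, u k) * lamstar i := by
          refine Finset.sum_le_sum fun i _ => ?_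
          exact mul_le_mul_of_nonneg_right (le_ciSup (Set.Finite.bddAbove
            (Set.finite_range u)) i) (hlam0 i)
      _ = ⨆ k, u k := by rw [← Finset.mul_sum, hlam1, mul_one]
  -- conclude
  have h1 : dualObj N m mt a ustar zstar = -C := by
    unfold dualObj
    rw [← hmaxstar]
    linarith [hstar]
  have h2 : -C ≤ dualObj N m mt a u z := by
    unfold dualObj
    have : -C ≤ ∑ i, u i * lamstar i + ∑ t, ∑ j, z t j * a t j := by
      linarith [hpos, hgen]
    linarith [hub]
  linarith [h1, h2]
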